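/- Let p be an odd prime and r ∈ ℤ/pℤ. Let N₊ be the number of g ∈ GL₂(ℤ/pℤ) with tr(g) = r and (det(g)/p) = 1, and N₋ the number of g ∈ GL₂(ℤ/pℤ) with tr(g) = r and (det(g)/p) = −1. Then N₊ − N₋ = ((−1)/p) · p(p−1) if r = 0 in ℤ/pℤ, and N₊ − N₋ = −((−1)/p) · p if r ≠ 0 in ℤ/pℤ. -/

import Mathlib

open Matrix Finset

section Aux
variable (p : ℕ) [Fact p.Prime]

private lemma rc2 (hp : p ≠ 2) : ringChar (ZMod p) ≠ 2 := by
  rw [ZMod.ringChar_zmod_n]; exact hp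

private lemma sum_bc (hp : p ≠ 2) (m : ZMod p) :
    ∑ b : ZMod p, ∑ c : ZMod p, quadraticChar (ZMod p) (m - b * c)
      = (p : ℤ) * quadraticChar (ZMod p) m := by
  rw [Finset.sum_eq_single_of_mem (0 : ZMod p) (Finset.mem_univ _)]
  · simp [ZMod.card]
  · intro b _ hb
    have : ∑ c : ZMod p, quadraticChar (ZMod p) (m - b * c)
        = ∑ x : ZMod p, quadraticChar (ZMod p) x := by
      apply Fintype.sum_equiv ((Equiv.mulLeft₀ b hb).trans (Equiv.subLeft m))
      intro c; simp [Equiv.subLeft]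
    rw [this, quadraticChar_sum_zero (rc2 p hp)]

private lemma sum_a (hp : p ≠ 2) (r : ZMod p) :
    ∑ a : ZMod p, quadraticChar (ZMod p) (a * (r - a))
      = if r = 0 then ((p : ℤ) - 1) * quadraticChar (ZMod p) (-1)
          else -quadraticChar (ZMod p) (-1) := by
  have hp1 : 1 ≤ p := (Fact.out : p.Prime).one_lt.le
  split_ifs with hr
  · subst hr
    rw [← Finset.add_sum_erase _ _ (Finset.mem_univ (0 : ZMod p))]
    have h1 : ∀ a ∈ Finset.univ.erase (0 : ZMod p),
        quadraticChar (ZMod p) (a * (0 - a)) = quadraticChar (ZMod p) (-1) := by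
      intro a ha
      have ha0 : a ≠ 0 := Finset.ne_of_mem_erase ha
      have : a * (0 - a) = (-1) * a ^ 2 := by ring
      rw [this, _root_.map_mul, quadraticChar_sq_one' ha0, mul_one]
    rw [Finset.sum_congr rfl h1, Finset.sum_const, Finset.card_erase_of_mem (Finset.mem_univ _),
      Finset.card_univ, ZMod.card, nsmul_eq_mul, Nat.cast_sub hp1]
    simp
  · -- reindex over nonzero a via v = r * a⁻¹ - 1
    rw [← Finset.add_sum_erase _ _ (Finset.mem_univ (0 : ZMod p))]
    have h2 : ∑ a ∈ Finset.univ.erase (0 : ZMod p), quadraticChar (ZMod p) (a * (r - a))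
        = ∑ v ∈ Finset.univ.erase (-1 : ZMod p), quadraticChar (ZMod p) v := by
      apply Finset.sum_nbij' (fun a => r * a⁻¹ - 1) (fun v => r * (v + 1)⁻¹)
      · intro a ha
        have ha0 : a ≠ 0 := Finset.ne_of_mem_erase ha
        refine Finset.mem_erase.2 ⟨?_, Finset.mem_univ _⟩
        intro h
        have : r * a⁻¹ = 0 := by linear_combination h
        exact (mul_ne_zero hr (inv_ne_zero ha0)) this
      · intro v hv
        have hv1 : v + 1 ≠ 0 := by
          intro h
          exact (Finset.ne_of_mem_erase hv) (by linear_combination h)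
        refine Finset.mem_erase.2 ⟨mul_ne_zero hr (inv_ne_zero hv1), Finset.mem_univ _⟩
      · intro a ha
        have ha0 : a ≠ 0 := Finset.ne_of_mem_erase ha
        field_simp
        rw [sub_add_cancel, div_self hr]
      · intro v hv
        have hv1 : v + 1 ≠ 0 := by
          intro h
          exact (Finset.ne_of_mem_erase hv) (by linear_combination h)
        field_simp
        ring
      · intro a ha
        have ha0 : a ≠ 0 := Finset.ne_of_mem_erase ha
        have : a * (r - a) = a ^ 2 * (r * a⁻¹ - 1) := by field_simp
        rw [this, _root_.map_mul, quadraticChar_sq_one' ha0, one_mul]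
    rw [h2, Finset.sum_erase_eq_sub (Finset.mem_univ _), quadraticChar_sum_zero (rc2 p hp)]
    simp
end Aux

section Aux2
variable (p : ℕ) [Fact p.Prime]

private lemma sum_mat (hp : p ≠ 2) (r : ZMod p) :
    ∑ M ∈ Finset.univ.filter
        (fun M : Matrix (Fin 2) (Fin 2) (ZMod p) => Matrix.trace M = r),
        quadraticChar (ZMod p) (Matrix.det M)
      = (p : ℤ) * ∑ a : ZMod p, quadraticChar (ZMod p) (a * (r - a)) := by
  have step : ∑ M ∈ Finset.univ.filter
        (fun M : Matrix (Fin 2) (Fin 2) (ZMod p) => Matrix.trace M = r),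
        quadraticChar (ZMod p) (Matrix.det M)
      = ∑ x : ZMod p × ZMod p × ZMod p,
          quadraticChar (ZMod p) (x.1 * (r - x.1) - x.2.1 * x.2.2) := by
    apply Finset.sum_bij' (fun M _ => (M 0 0, M 0 1, M 1 0))
      (fun x _ => !![x.1, x.2.1; x.2.2, r - x.1])
    · intro a ha; exact Finset.mem_univ _
    · intro x hx
      simp [Matrix.trace_fin_two]
    · intro M hM
      have htr : M 0 0 + M 1 1 = r := by
        simpa [Matrix.trace_fin_two] using (Finset.mem_filter.1 hM).2
      have h11 : r - M 0 0 = M 1 1 := by linear_combination -htr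
      rw [h11]
      exact (Matrix.eta_fin_two M).symm
    · intro x hx; simp
    · intro M hM
      have htr : M 0 0 + M 1 1 = r := by
        simpa [Matrix.trace_fin_two] using (Finset.mem_filter.1 hM).2
      rw [Matrix.det_fin_two]
      congr 1
      rw [← htr]; ring
  rw [step, Fintype.sum_prod_type]
  rw [Finset.mul_sum]
  refine Finset.sum_congr rfl fun a _ => ?_
  rw [← sum_bc p hp (a * (r - a)), Fintype.sum_prod_type]

end Aux2

section Aux3
variable (p : ℕ) [Fact p.Prime]

private lemma sum_gl (r : ZMod p) :
    ∑ g ∈ Finset.univ.filter (fun g : GL (Fin 2) (ZMod p) =>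
        Matrix.trace (g : Matrix (Fin 2) (Fin 2) (ZMod p)) = r),
      quadraticChar (ZMod p) (Matrix.det (g : Matrix (Fin 2) (Fin 2) (ZMod p)))
    = ∑ M ∈ Finset.univ.filter
        (fun M : Matrix (Fin 2) (Fin 2) (ZMod p) => Matrix.trace M = r),
      quadraticChar (ZMod p) (Matrix.det M) := by
  classical
  have h1 : ∑ M ∈ Finset.univ.filter
        (fun M : Matrix (Fin 2) (Fin 2) (ZMod p) => Matrix.trace M = r),
        quadraticChar (ZMod p) (Matrix.det M)
      = ∑ M ∈ Finset.univ.filter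
        (fun M : Matrix (Fin 2) (Fin 2) (ZMod p) => Matrix.trace M = r ∧ Matrix.det M ≠ 0),
        quadraticChar (ZMod p) (Matrix.det M) := by
    refine (Finset.sum_subset ?_ ?_).symm
    · intro M hM
      simp only [Finset.mem_filter, Finset.mem_univ, true_and] at *
      exact hM.1
    · intro M hM hM'
      simp only [Finset.mem_filter, Finset.mem_univ, true_and, not_and, not_not] at hM hM'
      rw [hM' hM]
      exact quadraticChar_zero
  rw [h1]
  refine Finset.sum_bij'
    (fun (g : GL (Fin 2) (ZMod p)) (_ : g ∈ _) => (g : Matrix (Fin 2) (Fin 2) (ZMod p)))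
    (fun M (hM : M ∈ _) => ((Matrix.isUnit_iff_isUnit_det M).2
      (Ne.isUnit (Finset.mem_filter.1 hM).2.2)).unit) ?_ ?_ ?_ ?_ ?_
  · intro g hg
    simp only [Finset.mem_filter, Finset.mem_univ, true_and]
    exact ⟨(Finset.mem_filter.1 hg).2, ((Matrix.isUnit_iff_isUnit_det _).1 g.isUnit).ne_zero⟩
  · intro M hM
    simp only [Finset.mem_filter, Finset.mem_univ, true_and, IsUnit.unit_spec]
    exact (Finset.mem_filter.1 hM).2.1
  · intro g hg
    exact Units.ext (IsUnit.unit_spec _)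
  · intro M hM
    exact IsUnit.unit_spec _
  · intro g hg
    rfl

end Aux3

/-- For an odd prime `p` and `r ∈ ℤ/pℤ`, letting `N₊` (resp. `N₋`) denote the number
of `g ∈ GL₂(ℤ/pℤ)` with `tr g = r` and Legendre symbol of `det g` equal to `1`
(resp. `-1`), one has `N₊ - N₋ = ((-1)/p)·p(p-1)` if `r = 0` and
`N₊ - N₋ = -((-1)/p)·p` if `r ≠ 0`. -/
theorem GL2_trace_det_legendre_bias (p : ℕ) [Fact p.Prime] (hp : p ≠ 2) (r : ZMod p) :
    (Nat.card {g : GL (Fin 2) (ZMod p) |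
        Matrix.trace (g : Matrix (Fin 2) (Fin 2) (ZMod p)) = r ∧
        legendreSym p ((Matrix.det (g : Matrix (Fin 2) (Fin 2) (ZMod p))).val : ℤ) = 1} : ℤ)
      - (Nat.card {g : GL (Fin 2) (ZMod p) |
        Matrix.trace (g : Matrix (Fin 2) (Fin 2) (ZMod p)) = r ∧
        legendreSym p ((Matrix.det (g : Matrix (Fin 2) (Fin 2) (ZMod p))).val : ℤ) = -1} : ℤ)
      = if r = 0 then legendreSym p (-1) * (p * (p - 1)) else -(legendreSym p (-1) * p) := by
  classical
  have hleg : ∀ x : ZMod p, legendreSym p (x.val : ℤ) = quadraticChar (ZMod p) x := by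
    intro x
    rw [legendreSym]
    congr 1
    rw [Int.cast_natCast, ZMod.natCast_val, ZMod.cast_id]
  have hcard : ∀ i : ℤ, Nat.card {g : GL (Fin 2) (ZMod p) |
        Matrix.trace (g : Matrix (Fin 2) (Fin 2) (ZMod p)) = r ∧
        legendreSym p ((Matrix.det (g : Matrix (Fin 2) (Fin 2) (ZMod p))).val : ℤ) = i}
      = (Finset.univ.filter (fun g : GL (Fin 2) (ZMod p) =>
          Matrix.trace (g : Matrix (Fin 2) (Fin 2) (ZMod p)) = r ∧
          quadraticChar (ZMod p) (Matrix.det (g : Matrix (Fin 2) (Fin 2) (ZMod p))) = i)).card := by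
    intro i
    rw [Nat.card_coe_set_eq, Set.ncard_eq_toFinset_card', Set.toFinset_setOf]
    congr 1
    apply Finset.filter_congr
    intro g _
    rw [hleg]
  rw [hcard 1, hcard (-1)]
  set S := Finset.univ.filter (fun g : GL (Fin 2) (ZMod p) =>
      Matrix.trace (g : Matrix (Fin 2) (Fin 2) (ZMod p)) = r) with hS
  set A1 := Finset.univ.filter (fun g : GL (Fin 2) (ZMod p) =>
          Matrix.trace (g : Matrix (Fin 2) (Fin 2) (ZMod p)) = r ∧
          quadraticChar (ZMod p) (Matrix.det (g : Matrix (Fin 2) (Fin 2) (ZMod p))) = 1) with hA1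
  set A2 := Finset.univ.filter (fun g : GL (Fin 2) (ZMod p) =>
          Matrix.trace (g : Matrix (Fin 2) (Fin 2) (ZMod p)) = r ∧
          quadraticChar (ZMod p) (Matrix.det (g : Matrix (Fin 2) (Fin 2) (ZMod p))) = -1) with hA2
  have hdet0 : ∀ g : GL (Fin 2) (ZMod p),
      Matrix.det (g : Matrix (Fin 2) (Fin 2) (ZMod p)) ≠ 0 :=
    fun g => ((Matrix.isUnit_iff_isUnit_det _).1 g.isUnit).ne_zero
  have key : (A1.card : ℤ) - (A2.card : ℤ)
      = ∑ g ∈ S, quadraticChar (ZMod p) (Matrix.det (g : Matrix (Fin 2) (Fin 2) (ZMod p))) := by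
    rw [← Finset.sum_filter_add_sum_filter_not S (fun g : GL (Fin 2) (ZMod p) =>
      quadraticChar (ZMod p) (Matrix.det (g : Matrix (Fin 2) (Fin 2) (ZMod p))) = 1)]
    have e1 : Finset.filter (fun g : GL (Fin 2) (ZMod p) =>
        quadraticChar (ZMod p) (Matrix.det (g : Matrix (Fin 2) (Fin 2) (ZMod p))) = 1) S
        = A1 := by
      rw [hS, Finset.filter_filter, hA1]
    have e2 : Finset.filter (fun g : GL (Fin 2) (ZMod p) =>
        ¬ quadraticChar (ZMod p) (Matrix.det (g : Matrix (Fin 2) (Fin 2) (ZMod p))) = 1) S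
        = A2 := by
      rw [hS, Finset.filter_filter, hA2]
      apply Finset.filter_congr
      intro g _
      constructor
      · rintro ⟨h1, h2⟩
        refine ⟨h1, ?_⟩
        rcases quadraticChar_dichotomy (hdet0 g) with h | h
        · exact absurd h h2
        · exact h
      · rintro ⟨h1, h2⟩
        exact ⟨h1, by rw [h2]; norm_num⟩
    rw [e1, e2]
    have s1 : ∑ g ∈ A1, quadraticChar (ZMod p)
        (Matrix.det (g : Matrix (Fin 2) (Fin 2) (ZMod p))) = (A1.card : ℤ) := by
      rw [Finset.sum_congr rfl (fun g hg => (Finset.mem_filter.1 (hA1 ▸ hg)).2.2),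
        Finset.sum_const, nsmul_eq_mul, mul_one]
    have s2 : ∑ g ∈ A2, quadraticChar (ZMod p)
        (Matrix.det (g : Matrix (Fin 2) (Fin 2) (ZMod p))) = -(A2.card : ℤ) := by
      rw [Finset.sum_congr rfl (fun g hg => (Finset.mem_filter.1 (hA2 ▸ hg)).2.2),
        Finset.sum_const, nsmul_eq_mul]
      ring
    rw [s1, s2]
    ring
  rw [key, sum_gl p r, sum_mat p hp r, sum_a p hp r]
  have hneg : legendreSym p (-1) = quadraticChar (ZMod p) (-1) := by
    rw [legendreSym]; norm_num
  rw [hneg]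
  have hp1 : 1 ≤ p := (Fact.out : p.Prime).one_lt.le
  split_ifs with hr
  · ring
  · ring
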